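/- A real n×n diagonal matrix D = diag(d₁,…,d_n) has the SSVP if and only if all d_i are nonzero and |d_i| ≠ |d_j| for all i ≠ j. -/

import Mathlib

open Matrix

/-- The strong singular value property. -/
def HasSSVP {m n : Type*} [Fintype m] [Fintype n] (A : Matrix m n ℝ) : Prop :=
  ∀ X : Matrix m n ℝ,
    (X * Aᵀ).IsSymm → (Aᵀ * X).IsSymm → (∀ i j, A i j ≠ 0 → X i j = 0) → X = 0

lemma stdBasis_transpose {n : ℕ} (i j : Fin n) (c : ℝ) :
    (Matrix.single i j c)ᵀ = Matrix.single j i c := by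
  ext a b
  by_cases h : i = b ∧ j = a
  · obtain ⟨rfl, rfl⟩ := h; simp
  · rw [Matrix.transpose_apply, Matrix.single_apply_of_ne _ _ _ _ _ h,
      Matrix.single_apply_of_ne]
    tauto

lemma stdBasis_mul_diag {n : ℕ} (d : Fin n → ℝ) (i j : Fin n) (c : ℝ) :
    Matrix.single i j c * Matrix.diagonal d = Matrix.single i j (c * d j) := by
  ext a b
  rw [Matrix.mul_diagonal]
  by_cases h : i = a ∧ j = b
  · obtain ⟨rfl, rfl⟩ := h; simp
  · rw [Matrix.single_apply_of_ne _ _ _ _ _ h, Matrix.single_apply_of_ne _ _ _ _ _ h,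
      zero_mul]

lemma diag_mul_stdBasis {n : ℕ} (d : Fin n → ℝ) (i j : Fin n) (c : ℝ) :
    Matrix.diagonal d * Matrix.single i j c = Matrix.single i j (d i * c) := by
  ext a b
  rw [Matrix.diagonal_mul]
  by_cases h : i = a ∧ j = b
  · obtain ⟨rfl, rfl⟩ := h; simp
  · rw [Matrix.single_apply_of_ne _ _ _ _ _ h, Matrix.single_apply_of_ne _ _ _ _ _ h,
      mul_zero]

lemma aux_not_ssvp {n : ℕ} (d : Fin n → ℝ) (i j : Fin n) (hij : i ≠ j) (c : ℝ)
    (hc1 : d j = c * d i) (hc2 : d i = c * d j) :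
    ¬ HasSSVP (Matrix.diagonal d) := by
  intro h
  have hz := h (Matrix.single i j 1 + Matrix.single j i c) ?_ ?_ ?_
  · have := congrFun (congrFun hz i) j
    have hne : ¬(j = i ∧ i = j) := fun ⟨h1, _⟩ => hij h1.symm
    rw [Matrix.add_apply, Matrix.single_apply_same,
      Matrix.single_apply_of_ne _ _ _ _ _ hne, Matrix.zero_apply] at this
    norm_num at this
  · rw [Matrix.diagonal_transpose, add_mul, stdBasis_mul_diag, stdBasis_mul_diag]
    unfold Matrix.IsSymm
    rw [Matrix.transpose_add, stdBasis_transpose, stdBasis_transpose]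
    rw [one_mul, hc1, mul_comm]
    exact add_comm _ _
  · rw [Matrix.diagonal_transpose, mul_add, diag_mul_stdBasis, diag_mul_stdBasis]
    unfold Matrix.IsSymm
    rw [Matrix.transpose_add, stdBasis_transpose, stdBasis_transpose]
    rw [mul_one, hc2, mul_comm]
    exact add_comm _ _
  · intro a b hab
    rcases eq_or_ne a b with rfl | hne
    · have h1 : ¬(i = a ∧ j = a) := fun ⟨h1, h2⟩ => hij (h1.trans h2.symm)
      have h2 : ¬(j = a ∧ i = a) := fun ⟨h1, h2⟩ => hij (h2.trans h1.symm)
      rw [Matrix.add_apply, Matrix.single_apply_of_ne _ _ _ _ _ h1,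
        Matrix.single_apply_of_ne _ _ _ _ _ h2, add_zero]
    · exact absurd (Matrix.diagonal_apply_ne d hne) hab

theorem stmt_15 (n : ℕ) (d : Fin n → ℝ) :
    HasSSVP (Matrix.diagonal d) ↔
      (∀ i, d i ≠ 0) ∧ ∀ i j, i ≠ j → |d i| ≠ |d j| := by
  constructor
  · intro h
    constructor
    · intro i hdi
      have hz := h (Matrix.single i i 1) ?_ ?_ ?_
      · have := congrFun (congrFun hz i) i
        rw [Matrix.single_apply_same, Matrix.zero_apply] at this
        norm_num at this
      · rw [Matrix.diagonal_transpose, stdBasis_mul_diag]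
        unfold Matrix.IsSymm
        rw [stdBasis_transpose]
      · rw [Matrix.diagonal_transpose, diag_mul_stdBasis]
        unfold Matrix.IsSymm
        rw [stdBasis_transpose]
      · intro a b hab
        rcases eq_or_ne a b with rfl | hne
        · rw [Matrix.diagonal_apply_eq] at hab
          have h1 : ¬(i = a ∧ i = a) := fun ⟨h1, _⟩ => hab (h1 ▸ hdi)
          rw [Matrix.single_apply_of_ne _ _ _ _ _ h1]
        · have h1 : ¬(i = a ∧ i = b) := fun ⟨h1, h2⟩ => hne (h1 ▸ h2 ▸ rfl)
          rw [Matrix.single_apply_of_ne _ _ _ _ _ h1]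
    · intro i j hij habs
      rcases abs_eq_abs.mp habs with heq | heq
      · exact aux_not_ssvp d i j hij 1 (by linarith) (by linarith) h
      · exact aux_not_ssvp d i j hij (-1) (by linarith) (by linarith) h
  · rintro ⟨hd, habs⟩ X h1 h2 h3
    ext a b
    rcases eq_or_ne a b with rfl | hne
    · exact h3 a a (by simpa using hd a)
    · have e1 : X b a * d a = X a b * d b := by
        have := h1.apply a b
        simpa [Matrix.diagonal_transpose, Matrix.mul_diagonal] using this
      have e2 : d b * X b a = d a * X a b := by
        have := h2.apply a b
        simpa [Matrix.diagonal_transpose, Matrix.diagonal_mul] using this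
      have key : X a b * (d a * d a - d b * d b) = 0 := by
        linear_combination d b * e1 - d a * e2
      rcases mul_eq_zero.mp key with h0 | h0
      · simpa using h0
      · exfalso
        apply habs a b hne
        have ha : d a * d a = d b * d b := by linarith
        have hb : |d a| * |d a| = |d b| * |d b| := by
          rw [abs_mul_abs_self, abs_mul_abs_self]; exact ha
        exact mul_self_inj (abs_nonneg _) (abs_nonneg _) |>.mp hb
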